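/- With L^N_q = N^{-q} Σ_{a∈[q]^[q]} ((N)_{|a|}/(q)_{|a|}) a in the monoid algebra of maps [q] → [q], one has the Laurent expansion L^N_q = Σ_{k=0}^{q-1} N^{-k} ∂^k L_q, where ∂^k L_q = Σ_{p=q-k}^{q} s(p,q-k) · (1/(q)_p) · Σ_{a∈[q]^[q]_p} a, and s(p,j) are signed Stirling numbers of the first kind. -/

import Mathlib

/-- Unsigned Stirling numbers of the first kind. -/
def stirlingFstUnsigned : ℕ → ℕ → ℕ
  | 0, 0 => 1
  | 0, _ + 1 => 0
  | _ + 1, 0 => 0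
  | n + 1, k + 1 => n * stirlingFstUnsigned n (k + 1) + stirlingFstUnsigned n k

/-- Signed Stirling numbers of the first kind. -/
def stirlingFst (n k : ℕ) : ℤ := (-1) ^ (n - k) * stirlingFstUnsigned n k

/-- The element `L^N_q = N^{-q} Σ_{a ∈ [q]^[q]} ((N)_{|a|}/(q)_{|a|}) a` of the monoid
algebra (formal linear combinations of maps `[q] → [q]` with rational coefficients). -/
noncomputable def LNq (N q : ℕ) : (Fin q → Fin q) →₀ ℚ :=
  ∑ a : Fin q → Fin q,
    Finsupp.single a
      (((N : ℚ) ^ q)⁻¹ *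
        ((N.descFactorial (Finset.univ.image a).card : ℚ) /
          (q.descFactorial (Finset.univ.image a).card : ℚ)))

/-- `∂^k L_q = Σ_{p=q-k}^{q} s(p,q-k) (1/(q)_p) Σ_{a ∈ [q]^[q]_p} a`. -/
noncomputable def dLq (q k : ℕ) : (Fin q → Fin q) →₀ ℚ :=
  ∑ p ∈ Finset.Icc (q - k) q,
    ∑ a ∈ Finset.univ.filter (fun a : Fin q → Fin q => (Finset.univ.image a).card = p),
      Finsupp.single a ((stirlingFst p (q - k) : ℚ) / (q.descFactorial p : ℚ))

lemma sfu_zero (p : ℕ) (hp : 0 < p) : stirlingFstUnsigned p 0 = 0 := by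
  obtain ⟨m, rfl⟩ := Nat.exists_eq_succ_of_ne_zero hp.ne'
  rfl

lemma sfu_gt (p k : ℕ) (h : p < k) : stirlingFstUnsigned p k = 0 := by
  induction p generalizing k with
  | zero =>
    obtain ⟨m, rfl⟩ : ∃ m, k = m + 1 := ⟨k - 1, by omega⟩
    rfl
  | succ n ih =>
    obtain ⟨m, rfl⟩ : ∃ m, k = m + 1 := ⟨k - 1, by omega⟩
    show n * stirlingFstUnsigned n (m+1) + stirlingFstUnsigned n m = 0
    rw [ih _ (by omega), ih _ (by omega)]; ring

lemma rising (p : ℕ) (x : ℚ) :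
    ∏ i ∈ Finset.range p, (x + i) =
      ∑ j ∈ Finset.range (p + 1), (stirlingFstUnsigned p j : ℚ) * x ^ j := by
  induction p with
  | zero => simp [stirlingFstUnsigned]
  | succ n ih =>
    set c : ℕ → ℚ := fun j => (stirlingFstUnsigned n j : ℚ) with hc
    set S : ℚ := ∑ j ∈ Finset.range (n + 1), c j * x ^ j with hS
    rw [Finset.prod_range_succ, ih,
      Finset.sum_range_succ' (fun j => (stirlingFstUnsigned (n+1) j : ℚ) * x ^ j)]
    have h0 : stirlingFstUnsigned (n+1) 0 = 0 := rfl
    have hrec : ∀ j, (stirlingFstUnsigned (n+1) (j+1) : ℚ) = n * c (j+1) + c j := by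
      intro j
      show ((n * stirlingFstUnsigned n (j + 1) + stirlingFstUnsigned n j : ℕ) : ℚ) = _
      push_cast; rfl
    simp only [hrec, h0]
    have e1 : ∑ j ∈ Finset.range (n+1), ((n:ℚ) * c (j+1) + c j) * x ^ (j+1)
        = n * (∑ j ∈ Finset.range (n+1), c (j+1) * x ^ (j+1)) + x * S := by
      rw [hS, Finset.mul_sum, Finset.mul_sum, ← Finset.sum_add_distrib]
      refine Finset.sum_congr rfl fun j _ => by ring
    have e2 : ∑ j ∈ Finset.range (n+1), c (j+1) * x ^ (j+1) = S - c 0 := by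
      have h3 := Finset.sum_range_succ' (fun j => c j * x ^ j) (n+1)
      rw [Finset.sum_range_succ (fun j => c j * x ^ j) (n+1)] at h3
      have : c (n+1) = 0 := by simp [hc, sfu_gt n (n+1) (by omega)]
      rw [this] at h3
      simp only [pow_zero, mul_one] at h3
      rw [← hS] at h3
      linarith
    rw [e1, e2]
    have hn0 : (n:ℚ) * c 0 = 0 := by
      rcases Nat.eq_zero_or_pos n with h | h
      · simp [h]
      · simp [hc, sfu_zero n h]
    push_cast
    linear_combination hn0

lemma falling (p : ℕ) (x : ℚ) :
    ∏ i ∈ Finset.range p, (x - i) =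
      ∑ j ∈ Finset.range (p + 1), (stirlingFst p j : ℚ) * x ^ j := by
  have h := rising p (-x)
  have hL : ∏ i ∈ Finset.range p, (-x + i) = (-1) ^ p * ∏ i ∈ Finset.range p, (x - i) := by
    have : ∏ i ∈ Finset.range p, (-x + (i:ℚ)) = ∏ i ∈ Finset.range p, ((-1:ℚ) * (x - i)) :=
      Finset.prod_congr rfl fun i _ => by ring
    rw [this, Finset.prod_mul_distrib, Finset.prod_const, Finset.card_range]
  rw [hL] at h
  have := congrArg (fun y => (-1 : ℚ) ^ p * y) h
  simp only [← mul_assoc, ← pow_add, ← two_mul, pow_mul, neg_one_sq, one_pow, one_mul] at this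
  rw [this, Finset.mul_sum]
  refine Finset.sum_congr rfl fun j hj => ?_
  rw [Finset.mem_range] at hj
  have hj' : j ≤ p := by omega
  have : (stirlingFst p j : ℚ) = (-1) ^ (p - j) * stirlingFstUnsigned p j := by
    simp [stirlingFst]
  rw [this]
  have hsign : ((-1 : ℚ)) ^ p * (-x) ^ j = (-1) ^ (p - j) * x ^ j := by
    rw [neg_pow x j]
    have : (-1 : ℚ) ^ p * (-1) ^ j = (-1) ^ (p - j) := by
      rw [← pow_add]
      have : p + j = (p - j) + 2 * j := by omega
      rw [this, pow_add, pow_mul, neg_one_sq, one_pow, mul_one]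
    rw [← mul_assoc, this]
  calc (-1:ℚ) ^ p * ((stirlingFstUnsigned p j : ℚ) * (-x) ^ j)
      = (stirlingFstUnsigned p j : ℚ) * ((-1:ℚ) ^ p * (-x) ^ j) := by ring
    _ = (stirlingFstUnsigned p j : ℚ) * ((-1) ^ (p - j) * x ^ j) := by rw [hsign]
    _ = (-1) ^ (p - j) * (stirlingFstUnsigned p j : ℚ) * x ^ j := by ring

lemma desc_cast (N p : ℕ) (h : p ≤ N) :
    (N.descFactorial p : ℚ) = ∏ i ∈ Finset.range p, ((N : ℚ) - i) := by
  induction p with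
  | zero => simp
  | succ n ih =>
    rw [Finset.prod_range_succ, ← ih (by omega), Nat.descFactorial_succ]
    push_cast [Nat.cast_sub (show n ≤ N by omega)]
    ring

lemma desc_sum (N p : ℕ) (h : p ≤ N) :
    (N.descFactorial p : ℚ) = ∑ j ∈ Finset.range (p + 1), (stirlingFst p j : ℚ) * (N:ℚ) ^ j := by
  rw [desc_cast N p h, falling]

lemma key (q N P : ℕ) (h1 : 1 ≤ P) (hPq : P ≤ q) (hqN : q ≤ N) :
    ((N:ℚ) ^ q)⁻¹ * ((N.descFactorial P : ℚ) / (q.descFactorial P : ℚ)) =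
    ∑ k ∈ Finset.range q, ((N:ℚ) ^ k)⁻¹ *
      (if q - k ≤ P then (stirlingFst P (q - k) : ℚ) / (q.descFactorial P : ℚ) else 0) := by
  have hq1 : 1 ≤ q := le_trans h1 hPq
  have hN0 : (N:ℚ) ≠ 0 := by
    have : 1 ≤ N := le_trans hq1 hqN
    exact_mod_cast Nat.cast_ne_zero.mpr (by omega)
  set d : ℚ := (q.descFactorial P : ℚ) with hd
  -- reduce RHS to a sum over j ∈ Icc 1 P
  have step1 : ∑ k ∈ Finset.range q, ((N:ℚ) ^ k)⁻¹ *
      (if q - k ≤ P then (stirlingFst P (q - k) : ℚ) / d else 0)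
      = ∑ j ∈ Finset.Icc 1 P, ((N:ℚ) ^ (q - j))⁻¹ * ((stirlingFst P j : ℚ) / d) := by
    have : ∀ k, ((N:ℚ) ^ k)⁻¹ * (if q - k ≤ P then (stirlingFst P (q - k) : ℚ) / d else 0)
        = if q - k ≤ P then ((N:ℚ) ^ k)⁻¹ * ((stirlingFst P (q - k) : ℚ) / d) else 0 := by
      intro k; split <;> simp
    simp only [this]
    rw [← Finset.sum_filter]
    refine Finset.sum_nbij' (i := fun k => q - k) (j := fun j => q - j) ?_ ?_ ?_ ?_ ?_
    · intro k hk
      simp only [Finset.mem_filter, Finset.mem_range] at hk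
      simp only [Finset.mem_Icc]
      omega
    · intro j hj
      simp only [Finset.mem_Icc] at hj
      simp only [Finset.mem_filter, Finset.mem_range]
      omega
    · intro k hk
      simp only [Finset.mem_filter, Finset.mem_range] at hk
      show q - (q - k) = k
      omega
    · intro j hj
      simp only [Finset.mem_Icc] at hj
      show q - (q - j) = j
      omega
    · intro k hk
      simp only [Finset.mem_filter, Finset.mem_range] at hk
      show _ = ((N:ℚ) ^ (q - (q - k)))⁻¹ * ((stirlingFst P (q - k) : ℚ) / d)
      congr 3
      omega
  rw [step1]
  -- extend to range (P+1)
  have step2 : ∑ j ∈ Finset.Icc 1 P, ((N:ℚ) ^ (q - j))⁻¹ * ((stirlingFst P j : ℚ) / d)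
      = ∑ j ∈ Finset.range (P + 1), ((N:ℚ) ^ (q - j))⁻¹ * ((stirlingFst P j : ℚ) / d) := by
    refine Finset.sum_subset ?_ ?_
    · intro j hj
      simp only [Finset.mem_Icc] at hj
      simp only [Finset.mem_range]
      omega
    · intro j hj hj'
      simp only [Finset.mem_range] at hj
      simp only [Finset.mem_Icc] at hj'
      have hj0 : j = 0 := by omega
      subst hj0
      have : stirlingFst P 0 = 0 := by
        simp [stirlingFst, sfu_zero P (by omega)]
      rw [this]
      simp
  rw [step2, desc_sum N P (le_trans hPq hqN), Finset.sum_div, Finset.mul_sum]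
  refine Finset.sum_congr rfl fun j hj => ?_
  simp only [Finset.mem_range] at hj
  have hsplit : (N:ℚ) ^ q = (N:ℚ) ^ (q - j) * (N:ℚ) ^ j := by
    rw [← pow_add]; congr 1; omega
  rw [hsplit, mul_inv]
  have hNj : (N:ℚ) ^ j ≠ 0 := pow_ne_zero _ hN0
  have hcancel : (N:ℚ) ^ j * ((N:ℚ) ^ j)⁻¹ = 1 := mul_inv_cancel₀ hNj
  rw [div_eq_mul_inv, div_eq_mul_inv]
  linear_combination (((N:ℚ) ^ (q - j))⁻¹ * (stirlingFst P j : ℚ) * d⁻¹) * hcancel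

/-- Laurent expansion `L^N_q = Σ_{k=0}^{q-1} N^{-k} ∂^k L_q` in the
monoid algebra of self-maps of `[q]`. -/
theorem stmt_7 (q N : ℕ) (hq : 1 ≤ q) (hqN : q ≤ N) :
    LNq N q = ∑ k ∈ Finset.range q, ((N : ℚ) ^ k)⁻¹ • dLq q k := by
  ext b
  set P : ℕ := (Finset.univ.image b).card with hP
  have hPq : P ≤ q := by
    have := Finset.card_le_univ (Finset.univ.image b)
    simpa using this
  have hP1 : 1 ≤ P := by
    refine Finset.card_pos.mpr ⟨b ⟨0, hq⟩, Finset.mem_image.mpr ⟨⟨0, hq⟩, Finset.mem_univ _, rfl⟩⟩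
  -- LHS
  have hL : LNq N q b = ((N:ℚ) ^ q)⁻¹ * ((N.descFactorial P : ℚ) / (q.descFactorial P : ℚ)) := by
    rw [LNq, Finset.sum_apply']
    simp only [Finsupp.single_apply]
    rw [Finset.sum_ite_eq' Finset.univ b]
    simp
    exact Or.inl rfl
  -- dLq applied
  have hD : ∀ k, dLq q k b =
      if q - k ≤ P then (stirlingFst P (q - k) : ℚ) / (q.descFactorial P : ℚ) else 0 := by
    intro k
    rw [dLq, Finset.sum_apply']
    have inner : ∀ p, (∑ a ∈ Finset.univ.filter
          (fun a : Fin q → Fin q => (Finset.univ.image a).card = p),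
        Finsupp.single a ((stirlingFst p (q - k) : ℚ) / (q.descFactorial p : ℚ))) b
        = if P = p then (stirlingFst p (q - k) : ℚ) / (q.descFactorial p : ℚ) else 0 := by
      intro p
      rw [Finset.sum_apply']
      simp only [Finsupp.single_apply]
      rw [Finset.sum_ite_eq' _ b]
      simp only [Finset.mem_filter, Finset.mem_univ, true_and]
      rfl
    simp only [inner]
    rw [Finset.sum_ite_eq (Finset.Icc (q - k) q) P]
    simp only [Finset.mem_Icc]
    by_cases h : q - k ≤ P
    · rw [if_pos ⟨h, hPq⟩, if_pos h]
    · rw [if_neg (by tauto), if_neg h]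
  rw [hL, Finset.sum_apply', key q N P hP1 hPq hqN]
  refine Finset.sum_congr rfl fun k _ => ?_
  rw [Finsupp.smul_apply, hD k, smul_eq_mul]
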